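/- If a relation ⪯ satisfies Left Disjunction and Equivalence together with Dominance and Left Monotonicity, then it satisfies Bounded Cut and Bounded Right Monotonicity. -/
import Mathlib

/-- A propositional language: a type of sentences with boolean connectives. -/
structure Lang (L : Type) where
  or : L → L → L
  and : L → L → L
  not : L → L
  imp : L → L → L
  bot : L
  top : L

/-- A classical valuation of the language: respects all connectives. -/
def Lang.Val {L : Type} (S : Lang L) (v : L → Prop) : Prop :=
  (∀ a b, v (S.or a b) ↔ v a ∨ v b) ∧
  (∀ a b, v (S.and a b) ↔ v a ∧ v b) ∧
  (∀ a, v (S.not a) ↔ ¬ v a) ∧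
  (∀ a b, v (S.imp a b) ↔ (v a → v b)) ∧
  ¬ v S.bot ∧ v S.top

/-- Classical consequence from a set of premises. -/
def Lang.SEnt {L : Type} (S : Lang L) (X : Set L) (b : L) : Prop :=
  ∀ v, S.Val v → (∀ a ∈ X, v a) → v b

/-- Classical consequence between single sentences: α ⊢ β. -/
def Lang.ent {L : Type} (S : Lang L) (a b : L) : Prop := S.SEnt {a} b

/-- Deductive closure. -/
def Lang.Cn {L : Type} (S : Lang L) (X : Set L) : Set L := {b | S.SEnt X b}

/-- Coh(α) = {β | ¬ (β ⪯ ¬α)}. -/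
def Coh {L : Type} (S : Lang L) (pr : L → L → Prop) (a : L) : Set L :=
  {b | ¬ pr b (S.not a)}

/-- The base of α: deductively closed subsets of Coh(α). -/
def Base {L : Type} (S : Lang L) (pr : L → L → Prop) (a : L) : Set (Set L) :=
  {U | U = S.Cn U ∧ U ⊆ Coh S pr a}

/-- The maximal base of α. -/
def MaxBase {L : Type} (S : Lang L) (pr : L → L → Prop) (a : L) : Set (Set L) :=
  {U | U ∈ Base S pr a ∧ ∀ U', U' = S.Cn U' → U ⊂ U' → U' ∉ Base S pr a}

/-- Maxiconsistent inference: α |~⪯ β. -/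
def MInf {L : Type} (S : Lang L) (pr : L → L → Prop) (a b : L) : Prop :=
  ∀ U ∈ MaxBase S pr a, b ∈ S.Cn (U ∪ {a})

/-- Left Disjunction and Equivalence, together with Dominance and Left Monotonicity,
imply Bounded Cut and Bounded Right Monotonicity. -/
theorem stmt4 {L : Type} (S : Lang L) (pr : L → L → Prop)
    (hld : ∀ a b c, pr b a → pr c a → pr (S.or b c) a)
    (heq : ∀ a b c, pr a b → pr b a → pr c a → pr c b)
    (hdom : ∀ a b, S.ent a b → pr a b)
    (hlm : ∀ a b c, S.ent a b → pr b c → pr a c) :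
    (∀ a b c, pr c (S.or a b) → pr b a → pr c a) ∧
    (∀ a b c, pr c a → pr b a → pr c (S.or a b)) := by
  have haa : ∀ a : L, pr a a := fun a =>
    hdom a a (fun v _ h => h a rfl)
  have haab : ∀ a b : L, pr a (S.or a b) := fun a b =>
    hdom a (S.or a b) (fun v hv h => ((hv.1 a b).2 (Or.inl (h a rfl))))
  have horb : ∀ a b : L, pr b a → pr (S.or a b) a := fun a b h =>
    hld a a b (haa a) h
  exact ⟨fun a b c hc hb => heq (S.or a b) a c (horb a b hb) (haab a b) hc,
         fun a b c hc hb => heq a (S.or a b) c (haab a b) (horb a b hb) hc⟩
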